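/- Let X be a non-singular simplicial set and Φ an n-simplex of X^{Δ[1]} with Φε_k = Φε_{k+1} for some 0 ≤ k < n. Then there is an (n-1)-simplex Ψ of X^{Δ[1]} with Φ = Ψσ_k; in particular Φ is degenerate. -/

import Mathlib

open CategoryTheory Simplicial Opposite MonoidalCategory Limits

/-- The representing map of a simplex is degreewise injective. -/
def SSet.RepInj (X : SSet.{0}) {n : ℕ} (x : X _⦋n⦌) : Prop :=
  ∀ m : SimplexCategoryᵒᵖ, Function.Injective (((SSet.yonedaEquiv (X := X) (n := ⦋n⦌)).symm x).app m)

/-- The `i`-th vertex `x εᵢ` of a simplex. -/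
def SSet.vert (X : SSet.{0}) {n : ℕ} (x : X _⦋n⦌) (i : Fin (n + 1)) : X _⦋0⦌ :=
  X.map (SimplexCategory.const ⦋0⦌ ⦋n⦌ i).op x

/-- A simplex is degenerate if it is obtained from a simplex of strictly
lower degree by the action of an operator. -/
def SSet.IsDegenerate (X : SSet.{0}) {n : ℕ} (x : X _⦋n⦌) : Prop :=
  ∃ (m : ℕ) (_ : m < n) (α : (⦋n⦌ : SimplexCategory) ⟶ ⦋m⦌) (y : X _⦋m⦌),
    X.map α.op y = x

/-- A simplicial set is non-singular if every non-degenerate simplex has a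
degreewise injective representing map. -/
def SSet.NonSingular (X : SSet.{0}) : Prop :=
  ∀ (n : ℕ) (x : X _⦋n⦌), ¬ X.IsDegenerate x → X.RepInj x


/-- The simplicial mapping set `X^K`, whose `n`-simplices are the simplicial
maps `Δ⦋n⦌ × K → X`. -/
noncomputable def SSet.sHom (K X : SSet.{0}) : SSet.{0} where
  obj m := SSet.stdSimplex.obj m.unop ⊗ K ⟶ X
  map α := TypeCat.ofHom fun f => (SSet.stdSimplex.map α.unop ▷ K) ≫ f
  map_id m := by
    ext f : 3
    simp
    erw [CategoryTheory.Functor.map_id]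
    simp
  map_comp α β := by
    ext f : 3
    simp
    erw [CategoryTheory.Functor.map_comp]
    simp [MonoidalCategory.comp_whiskerRight]

namespace SigmaPreimageAux

open SimplexCategory SSet

/-- The composite `σ j ≫ δ j.succ` fixes everything except `j.succ ↦ j.castSucc`. -/
lemma collapse_apply {m : ℕ} (j : Fin (m + 1)) (i : Fin (m + 2)) :
    (σ j ≫ δ j.succ).toOrderHom i = if i = j.succ then j.castSucc else i := by
  have e : (σ j ≫ δ j.succ).toOrderHom i = j.succ.succAbove (j.predAbove i) := rfl
  rw [e]
  rcases lt_trichotomy i j.succ with hlt | heq | hgt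
  · rw [if_neg hlt.ne, Fin.predAbove_of_lt_succ _ _ hlt,
      Fin.succAbove_of_castSucc_lt _ _ (by rwa [Fin.castSucc_castPred]),
      Fin.castSucc_castPred]
  · rw [if_pos heq, heq, Fin.predAbove_succ_self]
    exact Fin.succAbove_of_castSucc_lt _ _ (Fin.castSucc_lt_succ (i := j))
  · have hle : j.succ ≤ i := hgt.le
    rw [if_neg hgt.ne', Fin.predAbove_of_succ_le _ _ hle,
      Fin.succAbove_of_le_castSucc _ _ ?_, Fin.succ_pred]
    rw [Fin.le_def, Fin.coe_castSucc, Fin.coe_pred]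
    rw [Fin.lt_def] at hgt
    rw [Fin.val_succ] at hgt ⊢
    omega

/-- If `α` takes the same value on `j.castSucc` and `j.succ`, it is unchanged by
precomposition with `σ j ≫ δ j.succ`. -/
lemma collapse_comp {p m : ℕ} (j : Fin (m + 1)) (α : (⦋m + 1⦌ : SimplexCategory) ⟶ ⦋p⦌)
    (hα : α.toOrderHom j.castSucc = α.toOrderHom j.succ) :
    (σ j ≫ δ j.succ) ≫ α = α := by
  apply SimplexCategory.Hom.ext
  apply OrderHom.ext
  funext i
  have e : ((σ j ≫ δ j.succ) ≫ α).toOrderHom i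
      = α.toOrderHom ((σ j ≫ δ j.succ).toOrderHom i) := rfl
  rw [e, collapse_apply]
  split_ifs with h
  · subst h
    exact hα
  · rfl

/-- Eilenberg–Zilber: every simplex is a surjective operator applied to a
nondegenerate simplex. -/
lemma exists_ez (X : SSet.{0}) : ∀ (m : ℕ) (x : X _⦋m⦌),
    ∃ (p : ℕ) (α : (⦋m⦌ : SimplexCategory) ⟶ ⦋p⦌) (y : X _⦋p⦌),
      Function.Surjective α.toOrderHom ∧ ¬ X.IsDegenerate y ∧ X.map α.op y = x := by
  intro m
  induction m using Nat.strong_induction_on with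
  | _ m IH =>
    intro x
    by_cases hx : X.IsDegenerate x
    · obtain ⟨p, hp, α, y, rfl⟩ := hx
      obtain ⟨m, rfl⟩ : ∃ m', m = m' + 1 := ⟨m - 1, by omega⟩
      -- `α` is not injective, hence has two adjacent equal values
      have hni : ¬ Function.Injective α.toOrderHom := by
        intro hinj
        have := Fintype.card_le_of_injective _ hinj
        simp only [Fintype.card_fin, SimplexCategory.len_mk] at this
        omega
      rw [Function.not_injective_iff] at hni
      obtain ⟨a, b, he, hab⟩ := hni
      have key2 : ∀ a b : Fin (⦋m + 1⦌.len + 1), a < b →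
          α.toOrderHom a = α.toOrderHom b →
          ∃ j : Fin (m + 1), α.toOrderHom j.castSucc = α.toOrderHom j.succ := by
        intro a b hab he
        have hb : (b : ℕ) < m + 2 := by
          have := b.isLt
          simpa only [SimplexCategory.len_mk] using this
        have hab' : (a : ℕ) < (b : ℕ) := hab
        have ha : (a : ℕ) < m + 1 := by omega
        refine ⟨⟨(a : ℕ), ha⟩, ?_⟩
        have hca : ((⟨(a : ℕ), ha⟩ : Fin (m + 1)).castSucc : Fin (⦋m + 1⦌.len + 1)) = a := by
          apply Fin.ext
          rfl
        rw [hca]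
        refine le_antisymm (α.toOrderHom.monotone ?_) ?_
        · rw [Fin.le_def]
          show (a : ℕ) ≤ (a : ℕ) + 1
          omega
        · rw [he]
          refine α.toOrderHom.monotone ?_
          rw [Fin.le_def]
          show (a : ℕ) + 1 ≤ (b : ℕ)
          omega
      obtain ⟨j, hj1⟩ : ∃ j : Fin (m + 1),
          α.toOrderHom j.castSucc = α.toOrderHom j.succ := by
        rcases hab.lt_or_gt with hlt | hlt
        · exact key2 a b hlt he
        · exact key2 b a hlt he.symm
      set z := X.map ((δ j.succ) ≫ α).op y with hz
      obtain ⟨q, γ, w, hsurj, hnd, hw⟩ := IH m (by omega) z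
      refine ⟨q, σ j ≫ γ, w, ?_, hnd, ?_⟩
      · have hσ : Function.Surjective (σ j).toOrderHom := by
          intro b
          refine ⟨(δ j.succ).toOrderHom b, ?_⟩
          have := congrArg (fun f => f.toOrderHom b) (δ_comp_σ_succ (i := j))
          simpa using this
        have e : ((σ j ≫ γ).toOrderHom : Fin (m + 2) → Fin (q + 1))
            = γ.toOrderHom ∘ (σ j).toOrderHom := rfl
        rw [e]
        exact hsurj.comp hσ
      · have h1 : X.map (σ j ≫ γ).op w = X.map (σ j).op (X.map γ.op w) := by
          rw [← FunctorToTypes.map_comp_apply, ← op_comp]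
        rw [h1, hw, hz, ← FunctorToTypes.map_comp_apply, ← op_comp,
          ← Category.assoc, collapse_comp j α hj1]
    · exact ⟨m, 𝟙 _, x, fun b => ⟨b, rfl⟩, hx, by simp⟩

/-- In a non-singular simplicial set, a simplex with equal adjacent vertices is
fixed by the operator collapsing them. -/
lemma collapse_of_vert_eq (X : SSet.{0}) (hX : X.NonSingular) {m : ℕ}
    (x : X _⦋m + 1⦌) (j : Fin (m + 1))
    (hx : X.map (SimplexCategory.const ⦋0⦌ ⦋m + 1⦌ j.castSucc).op x
        = X.map (SimplexCategory.const ⦋0⦌ ⦋m + 1⦌ j.succ).op x) :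
    X.map (σ j ≫ δ j.succ).op x = x := by
  obtain ⟨p, α, y, hsurj, hnd, rfl⟩ := exists_ez X (m + 1) x
  have hrep := hX p y hnd (op ⦋0⦌)
  have h1 : ∀ i : Fin (m + 2), X.map (const ⦋0⦌ ⦋m + 1⦌ i).op (X.map α.op y)
      = X.map (const ⦋0⦌ ⦋p⦌ (α.toOrderHom i)).op y := by
    intro i
    rw [← FunctorToTypes.map_comp_apply, ← op_comp, SimplexCategory.const_comp]
  rw [h1, h1] at hx
  have heq : α.toOrderHom j.castSucc = α.toOrderHom j.succ := by
    have h2 : (ULift.up (const ⦋0⦌ ⦋p⦌ (α.toOrderHom j.castSucc)) :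
        (SSet.stdSimplex.obj ⦋p⦌).obj (op ⦋0⦌))
        = ULift.up (const ⦋0⦌ ⦋p⦌ (α.toOrderHom j.succ)) := hrep hx
    have h3 := congrArg (fun f => f.down.toOrderHom 0) h2
    simpa [SimplexCategory.const_apply] using h3
  rw [← FunctorToTypes.map_comp_apply, ← op_comp, collapse_comp j α heq]

end SigmaPreimageAux

set_option maxHeartbeats 1600000 in
/-- Let `X` be a non-singular simplicial set and `Φ` an
`(n+1)`-simplex of `X^{Δ[1]}` with `Φ ε_k = Φ ε_{k+1}` for some `k`.  Then
there is an `n`-simplex `Ψ` of `X^{Δ[1]}` with `Φ = Ψ σ_k`; in particular `Φ`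
is degenerate. -/
theorem exists_sigma_preimage (X : SSet.{0}) (hX : X.NonSingular) {n : ℕ}
    (Φ : (SSet.sHom Δ[1] X) _⦋n + 1⦌) (k : Fin (n + 1))
    (h : (SSet.sHom Δ[1] X).vert Φ k.castSucc = (SSet.sHom Δ[1] X).vert Φ k.succ) :
    (∃ Ψ : (SSet.sHom Δ[1] X) _⦋n⦌,
        (SSet.sHom Δ[1] X).map (SimplexCategory.σ k).op Ψ = Φ) ∧
      (SSet.sHom Δ[1] X).IsDegenerate Φ := by
  classical
  open SimplexCategory SigmaPreimageAux in
  -- the pointwise form of the hypothesis `h`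
  have h' : (SSet.stdSimplex.map (const ⦋0⦌ ⦋n + 1⦌ k.castSucc) ▷ Δ[1]) ≫ Φ
      = (SSet.stdSimplex.map (const ⦋0⦌ ⦋n + 1⦌ (k.succ : Fin (n + 2))) ▷ Δ[1]) ≫ Φ := h
  have hvert : ∀ (b : Δ[1].obj (op ⦋0⦌)),
      Φ.app (op ⦋0⦌) ((SSet.stdSimplex.objEquiv).symm (const ⦋0⦌ ⦋n + 1⦌ k.castSucc), b)
        = Φ.app (op ⦋0⦌)
          ((SSet.stdSimplex.objEquiv).symm (const ⦋0⦌ ⦋n + 1⦌ k.succ), b) := by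
    intro b
    have h0 := congrArg (fun (F : Δ[0] ⊗ Δ[1] ⟶ X) => F.app (op ⦋0⦌)
      ((SSet.stdSimplex.objEquiv).symm (𝟙 (⦋0⦌ : SimplexCategory)), b)) h'
    have e : ∀ i : Fin (n + 2),
        ((SSet.stdSimplex.map (const ⦋0⦌ ⦋n + 1⦌ i) ▷ Δ[1]) ≫ Φ).app (op ⦋0⦌)
          ((SSet.stdSimplex.objEquiv).symm (𝟙 (⦋0⦌ : SimplexCategory)), b)
        = Φ.app (op ⦋0⦌)
          ((SSet.stdSimplex.objEquiv).symm (const ⦋0⦌ ⦋n + 1⦌ i), b) := by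
      intro i
      have e2 : (SSet.stdSimplex.map (const ⦋0⦌ ⦋n + 1⦌ i)).app (op ⦋0⦌)
          ((SSet.stdSimplex.objEquiv).symm (𝟙 (⦋0⦌ : SimplexCategory)))
          = (SSet.stdSimplex.objEquiv).symm (const ⦋0⦌ ⦋n + 1⦌ i) := by
        show (SSet.stdSimplex.objEquiv).symm
            (𝟙 (⦋0⦌ : SimplexCategory) ≫ const ⦋0⦌ ⦋n + 1⦌ i)
            = (SSet.stdSimplex.objEquiv).symm (const ⦋0⦌ ⦋n + 1⦌ i)
        exact congrArg _ (by
          apply SimplexCategory.Hom.ext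
          apply OrderHom.ext
          funext a
          rfl)
      show Φ.app (op ⦋0⦌) ((SSet.stdSimplex.map (const ⦋0⦌ ⦋n + 1⦌ i)).app (op ⦋0⦌)
        ((SSet.stdSimplex.objEquiv).symm (𝟙 (⦋0⦌ : SimplexCategory))), b) = _
      rw [e2]
    rw [← e k.castSucc, ← e k.succ]
    exact h0
  -- key pointwise statement, by induction on the number of `k.succ`-values
  have key : ∀ (N m' : ℕ) (α : (⦋m'⦌ : SimplexCategory) ⟶ ⦋n + 1⦌) (β : Δ[1].obj (op ⦋m'⦌)),
      (Finset.univ.filter (fun i => α.toOrderHom i = k.succ)).card ≤ N →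
      Φ.app (op ⦋m'⦌)
          ((SSet.stdSimplex.objEquiv).symm (α ≫ (σ k ≫ δ k.succ)), β)
        = Φ.app (op ⦋m'⦌) ((SSet.stdSimplex.objEquiv).symm α, β) := by
    intro N
    induction N with
    | zero =>
      intro m' α β hc
      have hempty : ∀ i, α.toOrderHom i ≠ k.succ := by
        intro i hi
        have hmem : i ∈ Finset.univ.filter (fun i => α.toOrderHom i = k.succ) :=
          Finset.mem_filter.mpr ⟨Finset.mem_univ _, hi⟩
        have := Finset.card_pos.mpr ⟨i, hmem⟩
        omega
      have e : α ≫ (σ k ≫ δ k.succ) = α := by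
        apply SimplexCategory.Hom.ext
        apply OrderHom.ext
        funext i
        have e1 : (α ≫ (σ k ≫ δ k.succ)).toOrderHom i
            = (σ k ≫ δ k.succ).toOrderHom (α.toOrderHom i) := rfl
        rw [e1, collapse_apply, if_neg (hempty i)]
      rw [e]
    | succ N IH =>
      intro m' α β hc
      by_cases h0 : (Finset.univ.filter (fun i => α.toOrderHom i = k.succ)).card = 0
      · exact IH m' α β (by omega)
      · have hS : (Finset.univ.filter (fun i => α.toOrderHom i = k.succ)).Nonempty :=
          Finset.card_pos.mp (by omega)
        obtain ⟨j, hjmem, hjmin⟩ : ∃ j : Fin (m' + 1),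
            j ∈ (Finset.univ.filter (fun i => α.toOrderHom i = k.succ)) ∧
            ∀ i : Fin (m' + 1),
              i ∈ (Finset.univ.filter (fun i => α.toOrderHom i = k.succ)) → j ≤ i :=
          ⟨_, Finset.min'_mem _ hS, fun i hi => Finset.min'_le _ i hi⟩
        have hj : α.toOrderHom j = k.succ := (Finset.mem_filter.mp hjmem).2
        have hlt : ∀ i : Fin (m' + 1), i < j → α.toOrderHom i ≤ k.castSucc := by
          intro i hi
          have h1 : α.toOrderHom i ≤ α.toOrderHom j := α.toOrderHom.monotone hi.le
          rw [hj] at h1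
          have h2 : α.toOrderHom i ≠ k.succ := by
            intro he
            exact absurd (hjmin i (Finset.mem_filter.mpr ⟨Finset.mem_univ _, he⟩))
              (not_le.mpr hi)
          rw [Fin.le_castSucc_iff]
          exact lt_of_le_of_ne h1 h2
        -- the simplex `α₁` obtained by replacing the value at `j` by `k.castSucc`
        set α₁fun : Fin (m' + 1) → Fin (n + 2) :=
          fun i => if i = j then k.castSucc else α.toOrderHom i with hα₁fun
        have hα₁eval : ∀ i, α₁fun i = if i = j then k.castSucc else α.toOrderHom i :=
          fun i => rfl
        have hα₁le : ∀ i, α₁fun i ≤ α.toOrderHom i := by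
          intro i
          rw [hα₁eval]
          split_ifs with hij
          · rw [hij, hj]
            exact (Fin.castSucc_lt_succ (i := k)).le
          · exact le_rfl
        have hα₁mono : Monotone α₁fun := by
          intro a b hab
          rcases eq_or_lt_of_le hab with rfl | hab'
          · exact le_rfl
          rw [hα₁eval, hα₁eval]
          split_ifs with ha hb hb
          · exact le_rfl
          · calc (k.castSucc : Fin (n + 2)) ≤ k.succ := (Fin.castSucc_lt_succ (i := k)).le
              _ = α.toOrderHom j := hj.symm
              _ ≤ α.toOrderHom b := α.toOrderHom.monotone (ha ▸ hab'.le)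
          · exact hlt a (hb ▸ hab')
          · exact α.toOrderHom.monotone hab
        set α₁ : (⦋m'⦌ : SimplexCategory) ⟶ ⦋n + 1⦌ :=
          SimplexCategory.mkHom ⟨α₁fun, hα₁mono⟩ with hα₁def
        have hα₁app : ∀ i, α₁.toOrderHom i = α₁fun i := fun i => rfl
        -- the prism simplex `θ`
        set θfun : Fin (m' + 2) → Fin (n + 2) :=
          fun i => if i ≤ j.castSucc then α₁fun (j.predAbove i)
            else α.toOrderHom (j.predAbove i) with hθfun
        have hθeval : ∀ i, θfun i = if i ≤ j.castSucc then α₁fun (j.predAbove i)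
            else α.toOrderHom (j.predAbove i) := fun i => rfl
        have hθmono : Monotone θfun := by
          intro a b hab
          rw [hθeval, hθeval]
          split_ifs with ha hb hb
          · exact hα₁mono (Fin.predAbove_right_monotone j hab)
          · exact (hα₁le _).trans
              (α.toOrderHom.monotone (Fin.predAbove_right_monotone j hab))
          · exact absurd (hab.trans hb) ha
          · exact α.toOrderHom.monotone (Fin.predAbove_right_monotone j hab)
        set θ : (⦋m' + 1⦌ : SimplexCategory) ⟶ ⦋n + 1⦌ :=
          SimplexCategory.mkHom ⟨θfun, hθmono⟩ with hθdef
        have hθapp : ∀ i, θ.toOrderHom i = θfun i := fun i => rfl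
        have hθ1 : θfun j.castSucc = k.castSucc := by
          rw [hθeval, if_pos le_rfl, Fin.predAbove_castSucc_self, hα₁eval, if_pos rfl]
        have hθ2 : θfun j.succ = k.succ := by
          rw [hθeval, if_neg (not_le.mpr (Fin.castSucc_lt_succ (i := j))),
            Fin.predAbove_succ_self]
          exact hj
        have hδ1 : SimplexCategory.δ j.castSucc ≫ θ = α := by
          apply SimplexCategory.Hom.ext
          apply OrderHom.ext
          funext i
          have e1 : (SimplexCategory.δ j.castSucc ≫ θ).toOrderHom i
              = θfun (j.castSucc.succAbove i) := rfl
          rw [e1]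
          by_cases hij : i < j
          · rw [Fin.succAbove_of_castSucc_lt _ _ (Fin.castSucc_lt_castSucc_iff.mpr hij),
              hθeval, if_pos (Fin.castSucc_le_castSucc_iff.mpr hij.le),
              Fin.predAbove_castSucc_of_le _ _ hij.le, hα₁eval, if_neg hij.ne]
          · have hij' : j ≤ i := not_lt.mp hij
            rw [Fin.succAbove_of_le_castSucc _ _ (Fin.castSucc_le_castSucc_iff.mpr hij'),
              hθeval, if_neg (not_le.mpr (Fin.castSucc_lt_succ_iff.mpr hij')),
              Fin.predAbove_succ_of_le _ _ hij']
        have hδ2 : SimplexCategory.δ j.succ ≫ θ = α₁ := by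
          apply SimplexCategory.Hom.ext
          apply OrderHom.ext
          funext i
          have e1 : (SimplexCategory.δ j.succ ≫ θ).toOrderHom i
              = θfun (j.succ.succAbove i) := rfl
          rw [e1, hα₁app]
          by_cases hij : i ≤ j
          · rw [Fin.succAbove_of_castSucc_lt _ _ (Fin.castSucc_lt_succ_iff.mpr hij),
              hθeval, if_pos (Fin.castSucc_le_castSucc_iff.mpr hij),
              Fin.predAbove_castSucc_of_le _ _ hij]
          · have hij' : j < i := not_le.mp hij
            rw [Fin.succAbove_of_le_castSucc _ _ (Fin.succ_le_castSucc_iff.mpr hij'),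
              hθeval, if_neg (not_le.mpr (Fin.castSucc_lt_succ_iff.mpr hij'.le)),
              Fin.predAbove_succ_of_le _ _ hij'.le, hα₁eval, if_neg hij'.ne']
        -- the auxiliary simplex `x` of `X`
        set β' : Δ[1].obj (op ⦋m' + 1⦌) := Δ[1].map (SimplexCategory.σ j).op β with hβ'
        set x : X _⦋m' + 1⦌ :=
          Φ.app (op ⦋m' + 1⦌) ((SSet.stdSimplex.objEquiv).symm θ, β') with hxdef
        have hnat : ∀ (q : SimplexCategory) (c : q ⟶ ⦋m' + 1⦌),
            X.map c.op x = Φ.app (op q)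
              ((SSet.stdSimplex.objEquiv).symm (c ≫ θ), Δ[1].map c.op β') :=
          fun q c => (FunctorToTypes.naturality (Φ : Δ[n + 1] ⊗ Δ[1] ⟶ X) c.op
            (((SSet.stdSimplex.objEquiv).symm θ, β') : (Δ[n + 1] ⊗ Δ[1]).obj (op ⦋m' + 1⦌))).symm
        have ec : ∀ i : Fin (m' + 2), Δ[1].map (const ⦋0⦌ ⦋m' + 1⦌ i).op β'
            = Δ[1].map (const ⦋0⦌ ⦋m'⦌ (j.predAbove i)).op β := by
          intro i
          rw [hβ', ← FunctorToTypes.map_comp_apply, ← op_comp, SimplexCategory.const_comp]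
          rfl
        have hv : X.map (const ⦋0⦌ ⦋m' + 1⦌ j.castSucc).op x
            = X.map (const ⦋0⦌ ⦋m' + 1⦌ j.succ).op x := by
          rw [hnat _ _, hnat _ _, SimplexCategory.const_comp, SimplexCategory.const_comp,
            ec, ec, Fin.predAbove_castSucc_self, Fin.predAbove_succ_self, hθapp, hθapp,
            hθ1, hθ2]
          exact hvert _
        have hcol := collapse_of_vert_eq X hX x j hv
        have hfaces : X.map (δ j.castSucc).op x = X.map (δ j.succ).op x := by
          conv_lhs => rw [← hcol]
          rw [← FunctorToTypes.map_comp_apply, ← op_comp, ← Category.assoc,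
            δ_comp_σ_self, Category.id_comp]
        have hxα : X.map (δ j.castSucc).op x
            = Φ.app (op ⦋m'⦌) ((SSet.stdSimplex.objEquiv).symm α, β) := by
          rw [hnat _ _, hδ1]
          rw [hβ', ← FunctorToTypes.map_comp_apply, ← op_comp, δ_comp_σ_self]
          simp
        have hxα₁ : X.map (δ j.succ).op x
            = Φ.app (op ⦋m'⦌) ((SSet.stdSimplex.objEquiv).symm α₁, β) := by
          rw [hnat _ _, hδ2]
          rw [hβ', ← FunctorToTypes.map_comp_apply, ← op_comp, δ_comp_σ_succ]
          simp
        -- the count drops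
        have hcount :
            (Finset.univ.filter (fun i => α₁.toOrderHom i = k.succ)).card ≤ N := by
          have hset : Finset.univ.filter (fun i => α₁.toOrderHom i = k.succ)
              = (Finset.univ.filter (fun i => α.toOrderHom i = k.succ)).erase j := by
            ext i
            simp only [Finset.mem_filter, Finset.mem_univ, true_and, Finset.mem_erase]
            rw [hα₁app, hα₁eval]
            constructor
            · intro hi
              by_cases hij : i = j
              · rw [if_pos hij] at hi
                exact absurd hi (Fin.castSucc_lt_succ (i := k)).ne
              · rw [if_neg hij] at hi
                exact ⟨hij, hi⟩
            · rintro ⟨hij, hi⟩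
              rw [if_neg hij]
              exact hi
          rw [hset, Finset.card_erase_of_mem hjmem]
          omega
        have hIH := IH m' α₁ β hcount
        -- `α₁ ≫ g = α ≫ g`
        have hgg : α₁ ≫ (σ k ≫ δ k.succ) = α ≫ (σ k ≫ δ k.succ) := by
          apply SimplexCategory.Hom.ext
          apply OrderHom.ext
          funext i
          have e1 : (α₁ ≫ (σ k ≫ δ k.succ)).toOrderHom i
              = (σ k ≫ δ k.succ).toOrderHom (α₁fun i) := rfl
          have e2 : (α ≫ (σ k ≫ δ k.succ)).toOrderHom i
              = (σ k ≫ δ k.succ).toOrderHom (α.toOrderHom i) := rfl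
          rw [e1, e2, collapse_apply, collapse_apply, hα₁eval]
          by_cases hij : i = j
          · rw [if_pos hij, if_neg (Fin.castSucc_lt_succ (i := k)).ne, hij, hj, if_pos rfl]
          · rw [if_neg hij]
        calc Φ.app (op ⦋m'⦌)
              ((SSet.stdSimplex.objEquiv).symm (α ≫ (σ k ≫ δ k.succ)), β)
            = Φ.app (op ⦋m'⦌)
              ((SSet.stdSimplex.objEquiv).symm (α₁ ≫ (σ k ≫ δ k.succ))
                , β) := by rw [hgg]
          _ = Φ.app (op ⦋m'⦌) ((SSet.stdSimplex.objEquiv).symm α₁, β) := hIH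
          _ = X.map (δ j.succ).op x := hxα₁.symm
          _ = X.map (δ j.castSucc).op x := hfaces.symm
          _ = Φ.app (op ⦋m'⦌) ((SSet.stdSimplex.objEquiv).symm α, β) := hxα
  -- the main identity
  have main : (SSet.sHom Δ[1] X).map (σ k ≫ δ k.succ).op Φ = Φ := by
    show (SSet.stdSimplex.map (σ k ≫ δ k.succ) ▷ Δ[1]) ≫ Φ = Φ
    apply NatTrans.ext
    funext m
    obtain ⟨m⟩ := m
    rw [show m = (⦋m.len⦌ : SimplexCategory) from (SimplexCategory.mk_len m).symm]
    refine ConcreteCategory.hom_ext _ _ (fun z => ?_)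
    obtain ⟨a, b⟩ := z
    have e1 : ((SSet.stdSimplex.map (σ k ≫ δ k.succ) ▷ Δ[1]) ≫ Φ).app
          (op (⦋m.len⦌ : SimplexCategory)) (a, b)
        = Φ.app (op (⦋m.len⦌ : SimplexCategory))
          ((SSet.stdSimplex.objEquiv).symm
            ((SSet.stdSimplex.objEquiv) a ≫ (σ k ≫ δ k.succ)), b) := rfl
    exact e1.trans ((key _ m.len ((SSet.stdSimplex.objEquiv) a) b le_rfl).trans
      (congrArg (fun w => Φ.app (op (⦋m.len⦌ : SimplexCategory)) (w, b))
        (Equiv.symm_apply_apply _ a)))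
  have hmain : (SSet.sHom Δ[1] X).map (SimplexCategory.σ k).op
      ((SSet.sHom Δ[1] X).map (SimplexCategory.δ k.succ).op Φ) = Φ := by
    rw [← FunctorToTypes.map_comp_apply, ← op_comp]
    exact main
  exact ⟨⟨_, hmain⟩, ⟨n, Nat.lt_succ_self n, σ k, _, hmain⟩⟩
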